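/- For n = 1, the second-order cumulant of groups of operators satisfies, in the sense of trace-norm convergence on 𝔏¹(ℋ_{s+1}) for f_{s+1} ∈ 𝔏¹₀(ℋ_{s+1}): lim_{t→0} (1/t) 𝔄₂(t,{Y},s+1) f_{s+1} = −ε Σ_{i=1}^{s} 𝒩_int(i,s+1) f_{s+1}, where (−𝒩_int(i,s+1)) f = −i(Φ(i,s+1) f − f Φ(i,s+1)). Moreover for n > 1, since the particles interact by a two-body potential, lim_{t→0} (1/t) 𝔄_{1+n}(t) f_{s+n} = 0 in trace norm on 𝔏¹(ℋ_{s+n}). -/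

import Mathlib

/-!
STATEMENT 5 (infinitesimal generator of the second-order cumulant, and vanishing
of the generators of the higher-order cumulants for two-body interactions).

`L m` plays the role of `𝔏¹(ℋ_m)` and `D m` of the dense subspace `𝔏¹₀(ℋ_m)`.
For the cumulants acting on `𝔏¹(ℋ_{s+n})`, the set `({Y}, s+1, …, s+n)` of the
cluster `Y = (1,…,s)` (treated as one element) together with the particles
`s+1, …, s+n` is modelled by `Fin (n+1)`: the item `0` is the cluster `{Y}` and the
item `i ≥ 1` is the particle `s+i`. `Gc n X t` plays the role of the group
`𝒢_{|θ(X)|}(-t, θ(X))` of the particles `θ(X)` acting on `𝔏¹(ℋ_{s+n})` (with mean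
field scaled interaction `ε Φ`), where `θ` is the declusterization mapping; the
particles of the item `i` are given by `itemParticles s i` (`0`-based numbering).
`cumulant` is the `(1+n)`-th order cumulant
`𝔄_{1+n}(t,{Y},X∖Y) = Σ_P (-1)^{|P|-1}(|P|-1)! ∏_{X_i ⊂ P} 𝒢_{|θ(X_i)|}(-t,θ(X_i))`,
the sum over all partitions `P` of `({Y}, s+1, …, s+n)`.
`Nint m i j` is `𝒩_int(i,j)` on `𝔏¹(ℋ_m)`, pinned by
`(-𝒩_int(i,j)) f = -i(Φ(i,j) f - f Φ(i,j))` via the left and right multiplications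
`Phil`, `Phir` by the bounded potential `Φ(i,j)`; `K n i` is the generator of the
group of the single item `i` (for the cluster `{Y}` it contains the internal
interactions of `Y`).
-/

open MeasureTheory Filter Topology

/-- The particles (0-based) of the item `i` of the set `({Y}, s+1, …, s+n)`:
the cluster `0 = {Y}` consists of the particles `1,…,s` and the item `i ≥ 1`
is the particle `s+i`. -/
def itemParticles (s : ℕ) {n : ℕ} (i : Fin (n + 1)) : Finset ℕ :=
  if (i : ℕ) = 0 then Finset.range s else {s + (i : ℕ) - 1}

/-- The `(1+n)`-th order cumulant of a family of commuting (on disjoint sets of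
items) groups of operators:
`𝔄 = Σ_P (-1)^{|P|-1}(|P|-1)! ∏_{X_i ⊂ P} 𝒢(θ(X_i))`, the sum being over all
partitions `P` of the set of items. -/
noncomputable def cumulant {ι : Type*} [Fintype ι] [DecidableEq ι]
    {E : Type*} [NormedAddCommGroup E] [NormedSpace ℂ E]
    (Gc : Finset ι → E →L[ℂ] E)
    (hcomm : ∀ X Y : Finset ι, Disjoint X Y → Commute (Gc X) (Gc Y)) :
    E →L[ℂ] E :=
  ∑ P : Finpartition (Finset.univ : Finset ι),
    (((-1 : ℂ) ^ (P.parts.card - 1)) * (Nat.factorial (P.parts.card - 1) : ℂ)) •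
      P.parts.noncommProd Gc
        (fun a ha b hb hab => hcomm a b (P.disjoint ha hb hab))

namespace CumAux

section Comb
open Finset

variable {α : Type*} [DecidableEq α]

lemma avoid_parts_of_mem {S : Finset α} (P : Finpartition S) {B : Finset α}
    (hB : B ∈ P.parts) : (P.avoid B).parts = P.parts.erase B := by
  ext c
  rw [Finpartition.mem_avoid, mem_erase]
  constructor
  · rintro ⟨d, hd, hdB, rfl⟩
    have hdB' : d ≠ B := by rintro rfl; exact hdB le_rfl
    have hdisj : Disjoint B d := (P.disjoint hB hd hdB'.symm)
    rw [_root_.sdiff_eq_self_iff_disjoint.2 hdisj]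
    exact ⟨hdB', hd⟩
  · rintro ⟨hcB, hc⟩
    refine ⟨c, hc, fun hle => ?_, ?_⟩
    · exact P.bot_notMem (((P.disjoint hc hB hcB).eq_bot_of_le hle) ▸ hc)
    · exact _root_.sdiff_eq_self_iff_disjoint.2 (P.disjoint hB hc (Ne.symm hcB))

lemma card_pos_parts {S : Finset α} (P : Finpartition S) {B : Finset α}
    (hB : B ∈ P.parts) : 0 < P.parts.card := card_pos.2 ⟨B, hB⟩

/-- The marked-block decomposition of a sum over all finpartitions of `S`. -/
lemma sum_marked {M : Type*} [AddCommMonoid M] (S : Finset α) (g : Finset α → ℕ → M) :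
    (∑ Q : Finpartition S, ∑ B ∈ Q.parts, g B Q.parts.card)
      = ∑ B ∈ S.powerset.filter (fun B => B.Nonempty),
          ∑ Q : Finpartition (S \ B), g B (Q.parts.card + 1) := by
  rw [Finset.sum_sigma' (Finset.univ : Finset (Finpartition S)) (fun Q => Q.parts)
        (fun Q B => g B Q.parts.card),
      Finset.sum_sigma' (S.powerset.filter (fun B => B.Nonempty))
        (fun B => (Finset.univ : Finset (Finpartition (S \ B))))
        (fun B Q => g B (Q.parts.card + 1))]
  refine Finset.sum_bij'
    (fun p hp => (⟨p.2, p.1.avoid p.2⟩ : Σ B : Finset α, Finpartition (S \ B)))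
    (fun q hq => (⟨q.2.extend
        (by simpa [Finset.nonempty_iff_ne_empty] using (mem_filter.1 (mem_sigma.1 hq).1).2)
        sdiff_disjoint
        (sdiff_sup_cancel (mem_powerset.1 (mem_filter.1 (mem_sigma.1 hq).1).1)), q.1⟩ :
        Σ _ : Finpartition S, Finset α))
    ?_ ?_ ?_ ?_ ?_
  · rintro ⟨P, B⟩ hp
    have hB : B ∈ P.parts := (mem_sigma.1 hp).2
    refine mem_sigma.2 ⟨mem_filter.2 ⟨mem_powerset.2 (P.le hB), P.nonempty_of_mem_parts hB⟩,
      mem_univ _⟩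
  · rintro ⟨B, Q⟩ hq
    exact mem_sigma.2 ⟨mem_univ _, by simp [Finpartition.extend_parts]⟩
  · rintro ⟨P, B⟩ hp
    have hB : B ∈ P.parts := (mem_sigma.1 hp).2
    refine Sigma.ext ?_ (heq_of_eq rfl)
    refine Finpartition.ext ?_
    rw [Finpartition.extend_parts, avoid_parts_of_mem P hB, insert_erase hB]
  · rintro ⟨B, Q⟩ hq
    have hBne : B.Nonempty := (mem_filter.1 (mem_sigma.1 hq).1).2
    have hBnotin : B ∉ Q.parts := by
      intro h
      exact absurd (disjoint_self.1 (sdiff_disjoint.mono_left (Q.le h)))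
        (by simpa [Finset.bot_eq_empty, ← Finset.nonempty_iff_ne_empty] using hBne)
    refine Sigma.ext rfl (heq_of_eq ?_)
    refine Finpartition.ext ?_
    rw [avoid_parts_of_mem _ (by simp [Finpartition.extend_parts]),
      Finpartition.extend_parts, erase_insert hBnotin]
  · rintro ⟨P, B⟩ hp
    have hB : B ∈ P.parts := (mem_sigma.1 hp).2
    have : (P.avoid B).parts.card + 1 = P.parts.card := by
      rw [avoid_parts_of_mem P hB, card_erase_of_mem hB]
      exact Nat.succ_pred_eq_of_pos (card_pos_parts P hB)
    simp [this]


noncomputable def bsum (T : Finset α) : ℂ :=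
  ∑ Q : Finpartition T, (-1 : ℂ) ^ Q.parts.card * (Nat.factorial Q.parts.card : ℂ)

noncomputable def asum (S : Finset α) : ℂ :=
  ∑ P : Finpartition S,
    ((-1 : ℂ) ^ (P.parts.card - 1)) * (Nat.factorial (P.parts.card - 1) : ℂ)

lemma parts_card_eq_zero {T : Finset α} (hT : T = ∅) (Q : Finpartition T) :
    Q.parts.card = 0 := by
  rw [Finset.card_eq_zero, Finpartition.parts_eq_empty_iff, Finset.bot_eq_empty, hT]

lemma parts_card_pos {T : Finset α} (hT : T.Nonempty) (Q : Finpartition T) :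
    0 < Q.parts.card := by
  rw [Finset.card_pos, Finpartition.parts_nonempty_iff, Finset.bot_eq_empty]
  exact Finset.nonempty_iff_ne_empty.1 hT

instance : Unique (Finpartition (∅ : Finset α)) where
  default := (Finpartition.empty (Finset α)).copy Finset.bot_eq_empty
  uniq Q := by
    refine Finpartition.ext ?_
    have h1 : Q.parts = ∅ := Finset.card_eq_zero.1 (parts_card_eq_zero rfl Q)
    rw [h1]; rfl

lemma bsum_empty : bsum (∅ : Finset α) = 1 := by
  rw [bsum, Fintype.sum_unique]
  simp [parts_card_eq_zero rfl (default : Finpartition (∅ : Finset α))]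

lemma neg_one_pow_sub {a b : ℕ} (h : b ≤ a) : (-1 : ℂ) ^ (a - b) = (-1) ^ a * (-1) ^ b := by
  have h2 : ((-1 : ℂ) ^ b) * ((-1 : ℂ) ^ b) = 1 := by
    rw [← pow_add]; exact Even.neg_one_pow ⟨b, rfl⟩
  calc (-1 : ℂ) ^ (a - b) = (-1 : ℂ) ^ (a - b) * (((-1 : ℂ) ^ b) * ((-1 : ℂ) ^ b)) := by
        rw [h2, mul_one]
    _ = ((-1 : ℂ) ^ (a - b) * (-1 : ℂ) ^ b) * (-1 : ℂ) ^ b := by ring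
    _ = (-1 : ℂ) ^ a * (-1) ^ b := by rw [← pow_add, Nat.sub_add_cancel h]

lemma sum_powerset_neg_one_pow_card_complex (T : Finset α) :
    (∑ B ∈ T.powerset, (-1 : ℂ) ^ B.card) = if T = ∅ then 1 else 0 := by
  have := Finset.sum_powerset_neg_one_pow_card (x := T)
  calc (∑ B ∈ T.powerset, (-1 : ℂ) ^ B.card)
      = ((∑ B ∈ T.powerset, (-1 : ℤ) ^ B.card : ℤ) : ℂ) := by push_cast; rfl
    _ = _ := by rw [this]; split <;> simp

lemma sum_filter_nonempty_neg_one_pow_card (T : Finset α) (hT : T.Nonempty) :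
    (∑ B ∈ T.powerset.filter (fun B => B.Nonempty), (-1 : ℂ) ^ B.card) = -1 := by
  have hsplit := Finset.sum_filter_add_sum_filter_not T.powerset (fun B => B.Nonempty)
    (fun B => (-1 : ℂ) ^ B.card)
  have hnot : T.powerset.filter (fun B => ¬ B.Nonempty) = {∅} := by
    ext B
    simp [Finset.not_nonempty_iff_eq_empty]
    rintro rfl; exact Finset.empty_subset T
  rw [hnot] at hsplit
  have h0 : (∑ B ∈ ({∅} : Finset (Finset α)), (-1 : ℂ) ^ B.card) = 1 := by simp
  rw [h0, sum_powerset_neg_one_pow_card_complex] at hsplit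
  rw [if_neg (Finset.nonempty_iff_ne_empty.1 hT)] at hsplit
  linear_combination hsplit

lemma bsum_rec (T : Finset α) (hT : T.Nonempty) :
    bsum T = - ∑ B ∈ T.powerset.filter (fun B => B.Nonempty), bsum (T \ B) := by
  have h := sum_marked (M := ℂ) T
    (fun _ k => (-1 : ℂ) ^ (k - 1) * ((k - 1).factorial : ℂ))
  have hL : (∑ Q : Finpartition T, ∑ _B ∈ Q.parts,
      (-1 : ℂ) ^ (Q.parts.card - 1) * ((Q.parts.card - 1).factorial : ℂ)) = - bsum T := by
    rw [bsum, ← Finset.sum_neg_distrib]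
    refine Finset.sum_congr rfl fun Q _ => ?_
    obtain ⟨m, hm⟩ := Nat.exists_eq_succ_of_ne_zero (Nat.pos_iff_ne_zero.1 (parts_card_pos hT Q))
    rw [Finset.sum_const, hm]
    simp only [Nat.succ_sub_one, nsmul_eq_mul, Nat.factorial_succ, pow_succ]
    push_cast
    ring
  have hR : (∑ B ∈ T.powerset.filter (fun B => B.Nonempty), ∑ Q : Finpartition (T \ B),
      (-1 : ℂ) ^ (Q.parts.card + 1 - 1) * ((Q.parts.card + 1 - 1).factorial : ℂ))
      = ∑ B ∈ T.powerset.filter (fun B => B.Nonempty), bsum (T \ B) := by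
    refine Finset.sum_congr rfl fun B _ => ?_
    simp [bsum]
  rw [hL, hR] at h
  linear_combination -h

lemma bsum_eq (T : Finset α) : bsum T = (-1 : ℂ) ^ T.card := by
  induction T using Finset.strongInduction with
  | _ T ih =>
    rcases T.eq_empty_or_nonempty with rfl | hT
    · simpa using bsum_empty
    · have key : ∀ B ∈ T.powerset.filter (fun B => B.Nonempty),
          bsum (T \ B) = (-1 : ℂ) ^ T.card * (-1 : ℂ) ^ B.card := by
        intro B hB
        obtain ⟨hBT, hBne⟩ := Finset.mem_filter.1 hB
        rw [ih _ (Finset.sdiff_ssubset (Finset.mem_powerset.1 hBT) hBne),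
          Finset.card_sdiff_of_subset (Finset.mem_powerset.1 hBT),
          neg_one_pow_sub (Finset.card_le_card (Finset.mem_powerset.1 hBT))]
      rw [bsum_rec T hT, Finset.sum_congr rfl key, ← Finset.mul_sum,
        sum_filter_nonempty_neg_one_pow_card T hT]
      ring

lemma sum_filter_mem_neg_one_pow_card {S : Finset α} {x : α} (hx : x ∈ S)
    (hS : 2 ≤ S.card) :
    (∑ B ∈ S.powerset.filter (fun B => x ∈ B), (-1 : ℂ) ^ B.card) = 0 := by
  have h : (∑ B ∈ S.powerset.filter (fun B => x ∈ B), (-1 : ℂ) ^ B.card)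
      = ∑ C ∈ (S.erase x).powerset, -(-1 : ℂ) ^ C.card := by
    refine Finset.sum_bij' (fun B _ => B.erase x) (fun C _ => insert x C) ?_ ?_ ?_ ?_ ?_
    · intro B hB
      obtain ⟨hBT, hxB⟩ := Finset.mem_filter.1 hB
      exact Finset.mem_powerset.2
        (Finset.erase_subset_erase x (Finset.mem_powerset.1 hBT))
    · intro C hC
      refine Finset.mem_filter.2 ⟨Finset.mem_powerset.2 ?_, Finset.mem_insert_self x C⟩
      exact Finset.insert_subset hx
        ((Finset.mem_powerset.1 hC).trans (Finset.erase_subset x S))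
    · intro B hB
      exact Finset.insert_erase (Finset.mem_filter.1 hB).2
    · intro C hC
      exact Finset.erase_insert
        (fun hxC => (Finset.mem_erase.1 ((Finset.mem_powerset.1 hC) hxC)).1 rfl)
    · intro B hB
      have hxB := (Finset.mem_filter.1 hB).2
      rw [← Finset.card_erase_add_one hxB, pow_succ]
      ring
  rw [h, Finset.sum_neg_distrib, sum_powerset_neg_one_pow_card_complex,
    if_neg]
  · simp
  · intro hemp
    have hc := Finset.card_erase_of_mem hx
    rw [hemp, Finset.card_empty] at hc
    omega

lemma asum_eq_zero {S : Finset α} (hS : 2 ≤ S.card) : asum S = 0 := by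
  obtain ⟨x, hx⟩ : S.Nonempty := Finset.card_pos.1 (by omega)
  have h := sum_marked (M := ℂ) S
    (fun B k => if x ∈ B then (-1 : ℂ) ^ (k - 1) * ((k - 1).factorial : ℂ) else 0)
  have hL : (∑ Q : Finpartition S, ∑ B ∈ Q.parts,
      (if x ∈ B then (-1 : ℂ) ^ (Q.parts.card - 1) * ((Q.parts.card - 1).factorial : ℂ) else 0))
      = asum S := by
    refine Finset.sum_congr rfl fun Q _ => ?_
    rw [Finset.sum_eq_single (Q.part x)]
    · rw [if_pos (Q.mem_part hx)]
    · intro B hB hne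
      exact if_neg (fun hxB => hne (Q.part_eq_of_mem hB hxB).symm)
    · intro habs; exact absurd (Q.part_mem.2 hx) habs
  have hR : (∑ B ∈ S.powerset.filter (fun B => B.Nonempty), ∑ Q : Finpartition (S \ B),
      (if x ∈ B then (-1 : ℂ) ^ (Q.parts.card + 1 - 1) * ((Q.parts.card + 1 - 1).factorial : ℂ)
        else 0))
      = ∑ B ∈ S.powerset.filter (fun B => x ∈ B), (-1 : ℂ) ^ S.card * (-1 : ℂ) ^ B.card := by
    have step1 : ∀ B ∈ S.powerset.filter (fun B => B.Nonempty),
        (∑ Q : Finpartition (S \ B),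
          (if x ∈ B then (-1 : ℂ) ^ (Q.parts.card + 1 - 1) * ((Q.parts.card + 1 - 1).factorial : ℂ)
            else 0)) = if x ∈ B then bsum (S \ B) else 0 := by
      intro B _
      by_cases hxB : x ∈ B <;> simp [hxB, bsum]
    rw [Finset.sum_congr rfl step1, Finset.sum_filter, Finset.sum_filter]
    refine Finset.sum_congr rfl fun B hB => ?_
    by_cases hxB : x ∈ B
    · have hne : B.Nonempty := ⟨x, hxB⟩
      simp only [hne, if_true, hxB]
      rw [bsum_eq, Finset.card_sdiff_of_subset (Finset.mem_powerset.1 hB),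
        neg_one_pow_sub (Finset.card_le_card (Finset.mem_powerset.1 hB))]
    · simp [hxB]
  rw [hL, hR, ← Finset.mul_sum, sum_filter_mem_neg_one_pow_card hx hS, mul_zero] at h
  exact h

section SamePart

variable {α : Type*} [DecidableEq α]

/-- Remove the point `j` from the block `B₀` of a finpartition. -/
def delPt {S : Finset α} (P : Finpartition S) (B₀ : Finset α) (hB₀ : B₀ ∈ P.parts)
    (j : α) (hj : j ∈ B₀) (hne : (B₀.erase j).Nonempty) : Finpartition (S.erase j) where
  parts := insert (B₀.erase j) (P.parts.erase B₀)
  supIndep := by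
    rw [Finset.supIndep_iff_pairwiseDisjoint, Finset.coe_insert]
    refine Set.PairwiseDisjoint.insert
      (P.disjoint.subset (by exact_mod_cast Finset.erase_subset B₀ P.parts)) ?_
    intro d hd _
    have hd' := Finset.mem_erase.1 hd
    exact ((P.disjoint hB₀ hd'.2 (Ne.symm hd'.1)).mono_left
      (Finset.erase_subset j B₀) : _)
  sup_parts := by
    have hS : B₀ ⊔ (P.parts.erase B₀).sup id = S := by
      conv_rhs => rw [← P.sup_parts, ← Finset.insert_erase hB₀]
      rw [Finset.sup_insert, id_eq]
    rw [Finset.sup_insert, id_eq]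
    ext a
    rw [Finset.sup_eq_union, Finset.mem_union, Finset.mem_erase, Finset.mem_erase]
    constructor
    · rintro (⟨haj, haB⟩ | haR)
      · exact ⟨haj, by rw [← hS, Finset.sup_eq_union]; exact Finset.mem_union_left _ haB⟩
      · obtain ⟨d, hd, had⟩ := Finset.mem_sup.1 haR
        have hd' := Finset.mem_erase.1 hd
        refine ⟨?_, ?_⟩
        · rintro rfl
          exact (Finset.disjoint_left.1 (P.disjoint hB₀ hd'.2 (Ne.symm hd'.1)) hj)
            (by simpa using had)
        · rw [← hS, Finset.sup_eq_union]
          exact Finset.mem_union_right _ haR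
    · rintro ⟨haj, haS⟩
      rw [← hS, Finset.sup_eq_union, Finset.mem_union] at haS
      rcases haS with haB | haR
      · exact Or.inl ⟨haj, haB⟩
      · exact Or.inr haR
  bot_notMem := by
    rw [Finset.mem_insert]
    rintro (h | h)
    · rw [Finset.bot_eq_empty] at h
      exact Finset.nonempty_iff_ne_empty.1 hne h.symm
    · exact P.bot_notMem (Finset.mem_of_mem_erase h)

lemma delPt_not_mem {S : Finset α} (P : Finpartition S) {B₀ : Finset α} (hB₀ : B₀ ∈ P.parts)
    {j : α} (hne : (B₀.erase j).Nonempty) : B₀.erase j ∉ P.parts.erase B₀ := by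
  intro h
  have h' := Finset.mem_erase.1 h
  obtain ⟨a, ha⟩ := hne
  exact h'.1 (P.eq_of_mem_parts h'.2 hB₀ ha (Finset.mem_of_mem_erase ha))

@[simp] lemma delPt_parts {S : Finset α} (P : Finpartition S) (B₀ : Finset α)
    (hB₀ : B₀ ∈ P.parts) (j : α) (hj : j ∈ B₀) (hne : (B₀.erase j).Nonempty) :
    (delPt P B₀ hB₀ j hj hne).parts = insert (B₀.erase j) (P.parts.erase B₀) := rfl

lemma delPt_parts_card {S : Finset α} (P : Finpartition S) (B₀ : Finset α)
    (hB₀ : B₀ ∈ P.parts) (j : α) (hj : j ∈ B₀) (hne : (B₀.erase j).Nonempty) :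
    (delPt P B₀ hB₀ j hj hne).parts.card = P.parts.card := by
  rw [delPt_parts, Finset.card_insert_of_notMem (delPt_not_mem P hB₀ hne),
    Finset.card_erase_of_mem hB₀]
  have : 0 < P.parts.card := Finset.card_pos.2 ⟨B₀, hB₀⟩
  omega

/-- Insert a new point `j` into the block `C₀` of a finpartition. -/
def addPt {T : Finset α} (Q : Finpartition T) (C₀ : Finset α) (hC₀ : C₀ ∈ Q.parts)
    (j : α) (hj : j ∉ T) : Finpartition (insert j T) where
  parts := insert (insert j C₀) (Q.parts.erase C₀)
  supIndep := by
    rw [Finset.supIndep_iff_pairwiseDisjoint, Finset.coe_insert]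
    refine Set.PairwiseDisjoint.insert
      (Q.disjoint.subset (by exact_mod_cast Finset.erase_subset C₀ Q.parts)) ?_
    intro d hd _
    have hd' := Finset.mem_erase.1 hd
    rw [id_eq, id_eq, Finset.disjoint_insert_left]
    exact ⟨fun h => hj (Q.le hd'.2 h), Q.disjoint hC₀ hd'.2 (Ne.symm hd'.1)⟩
  sup_parts := by
    have hS : C₀ ⊔ (Q.parts.erase C₀).sup id = T := by
      conv_rhs => rw [← Q.sup_parts, ← Finset.insert_erase hC₀]
      rw [Finset.sup_insert, id_eq]
    rw [Finset.sup_insert, id_eq, Finset.sup_eq_union, Finset.insert_union,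
      ← Finset.sup_eq_union, hS]
  bot_notMem := by
    rw [Finset.mem_insert]
    rintro (h | h)
    · exact (Finset.insert_nonempty j C₀).ne_empty (by rw [← h]; rfl)
    · exact Q.bot_notMem (Finset.mem_of_mem_erase h)

@[simp] lemma addPt_parts {T : Finset α} (Q : Finpartition T) (C₀ : Finset α)
    (hC₀ : C₀ ∈ Q.parts) (j : α) (hj : j ∉ T) :
    (addPt Q C₀ hC₀ j hj).parts = insert (insert j C₀) (Q.parts.erase C₀) := rfl

lemma addPt_not_mem {T : Finset α} (Q : Finpartition T) {C₀ : Finset α} (hC₀ : C₀ ∈ Q.parts)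
    {j : α} (hj : j ∉ T) : insert j C₀ ∉ Q.parts.erase C₀ := by
  intro h
  exact hj (Q.le (Finset.mem_of_mem_erase h) (Finset.mem_insert_self j C₀))

end SamePart

section SamePartSum

variable {α : Type*} [DecidableEq α] [Fintype α]

lemma sum_samePart (i j : α) (hij : i ≠ j) :
    (∑ P : Finpartition (Finset.univ : Finset α),
      (if j ∈ P.part i then
        ((-1 : ℂ) ^ (P.parts.card - 1)) * ((P.parts.card - 1).factorial : ℂ) else 0))
      = asum ((Finset.univ : Finset α).erase j) := by
  rw [← Finset.sum_filter, asum]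
  have hi' : i ∈ (Finset.univ : Finset α).erase j := Finset.mem_erase.2 ⟨hij, Finset.mem_univ i⟩
  have hjC : ∀ (Q : Finpartition ((Finset.univ : Finset α).erase j)), j ∉ Q.part i :=
    fun Q h => (Finset.mem_erase.1 (Q.le (Q.part_mem.2 hi') h)).1 rfl
  refine Finset.sum_bij'
    (fun P hP => delPt P (P.part i) (P.part_mem.2 (Finset.mem_univ i)) j
      ((Finset.mem_filter.1 hP).2)
      (show ((P.part i).erase j).Nonempty from
        ⟨i, Finset.mem_erase.2 ⟨hij, P.mem_part (Finset.mem_univ i)⟩⟩))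
    (fun Q hQ => (addPt Q (Q.part i) (Q.part_mem.2 hi') j
      (Finset.notMem_erase j _)).copy (Finset.insert_erase (Finset.mem_univ j)))
    (fun P hP => Finset.mem_univ _) ?_ ?_ ?_ ?_
  · -- addPt lands in the filter
    intro Q hQ
    refine Finset.mem_filter.2 ⟨Finset.mem_univ _, ?_⟩
    have hmem : insert j (Q.part i) ∈
        ((addPt Q (Q.part i) (Q.part_mem.2 hi') j (Finset.notMem_erase j _)).copy
          (Finset.insert_erase (Finset.mem_univ j))).parts := by
      rw [Finpartition.copy_parts, addPt_parts]
      exact Finset.mem_insert_self _ _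
    rw [Finpartition.part_eq_of_mem _ hmem
      (Finset.mem_insert_of_mem (Q.mem_part hi'))]
    exact Finset.mem_insert_self j _
  · -- left inverse
    intro P hP
    have hjP : j ∈ P.part i := (Finset.mem_filter.1 hP).2
    set B₀ := P.part i with hB₀def
    have hB₀ : B₀ ∈ P.parts := P.part_mem.2 (Finset.mem_univ i)
    have hne : (B₀.erase j).Nonempty :=
      ⟨i, Finset.mem_erase.2 ⟨hij, P.mem_part (Finset.mem_univ i)⟩⟩
    have hpart : (delPt P B₀ hB₀ j hjP hne).part i = B₀.erase j :=
      Finpartition.part_eq_of_mem _ (by rw [delPt_parts]; exact Finset.mem_insert_self _ _)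
        (Finset.mem_erase.2 ⟨hij, P.mem_part (Finset.mem_univ i)⟩)
    refine Finpartition.ext ?_
    rw [Finpartition.copy_parts, addPt_parts, hpart, delPt_parts,
      Finset.erase_insert (delPt_not_mem P hB₀ hne), Finset.insert_erase hjP,
      Finset.insert_erase hB₀]
  · -- right inverse
    intro Q hQ
    set C₀ := Q.part i with hC₀def
    have hC₀ : C₀ ∈ Q.parts := Q.part_mem.2 hi'
    have hpart : ((addPt Q C₀ hC₀ j (Finset.notMem_erase j _)).copy
        (Finset.insert_erase (Finset.mem_univ j))).part i = insert j C₀ :=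
      Finpartition.part_eq_of_mem _
        (by rw [Finpartition.copy_parts, addPt_parts]; exact Finset.mem_insert_self _ _)
        (Finset.mem_insert_of_mem (Q.mem_part hi'))
    refine Finpartition.ext ?_
    rw [delPt_parts, hpart, Finpartition.copy_parts, addPt_parts,
      Finset.erase_insert (addPt_not_mem Q hC₀ (Finset.notMem_erase j _)),
      Finset.erase_insert (fun h => hjC Q h), Finset.insert_erase hC₀]
  · -- values
    intro P hP
    rw [delPt_parts_card]

lemma sum_samePart_zero (i j : α) (hij : i ≠ j) (hcard : 3 ≤ Fintype.card α) :
    (∑ P : Finpartition (Finset.univ : Finset α),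
      (if j ∈ P.part i then
        ((-1 : ℂ) ^ (P.parts.card - 1)) * ((P.parts.card - 1).factorial : ℂ) else 0)) = 0 := by
  rw [sum_samePart i j hij]
  refine asum_eq_zero ?_
  rw [Finset.card_erase_of_mem (Finset.mem_univ j), Finset.card_univ]
  omega

lemma asum_univ_zero (hcard : 2 ≤ Fintype.card α) :
    asum (Finset.univ : Finset α) = 0 :=
  asum_eq_zero (by rw [Finset.card_univ]; exact hcard)

end SamePartSum

section Blocks

variable {α : Type*} [DecidableEq α] [Fintype α] {E : Type*} [AddCommMonoid E]

lemma blocks_item_sum (P : Finpartition (Finset.univ : Finset α)) (g : α → E) :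
    (∑ X ∈ P.parts, ∑ i ∈ X, g i) = ∑ i ∈ (Finset.univ : Finset α), g i := by
  have := (Finset.sum_biUnion (f := g) (t := (id : Finset α → Finset α)) (P.disjoint : _))
  rw [show P.parts.biUnion id = (Finset.univ : Finset α) from P.biUnion_parts] at this
  exact this.symm

lemma blocks_pair_sum (P : Finpartition (Finset.univ : Finset α))
    (c : α × α → Prop) [DecidablePred c] (M : α × α → E) :
    (∑ X ∈ P.parts, ∑ p ∈ X.offDiag.filter c, M p)
      = ∑ p ∈ (Finset.univ : Finset α).offDiag.filter c,
          (if p.2 ∈ P.part p.1 then M p else 0) := by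
  have hdisj : (↑P.parts : Set (Finset α)).PairwiseDisjoint
      (fun X => X.offDiag.filter c) := by
    intro X hX Y hY hXY
    rw [Function.onFun, Finset.disjoint_left]
    intro p hpX hpY
    have h1 := (Finset.mem_offDiag.1 (Finset.mem_filter.1 hpX).1).1
    have h2 := (Finset.mem_offDiag.1 (Finset.mem_filter.1 hpY).1).1
    exact Finset.disjoint_left.1 (P.disjoint hX hY hXY) h1 h2
  rw [← Finset.sum_biUnion hdisj]
  have hset : P.parts.biUnion (fun X => X.offDiag.filter c)
      = ((Finset.univ : Finset α).offDiag.filter c).filter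
          (fun p => p.2 ∈ P.part p.1) := by
    ext p
    simp only [Finset.mem_biUnion, Finset.mem_filter, Finset.mem_offDiag, Finset.mem_univ,
      true_and]
    constructor
    · rintro ⟨X, hX, ⟨⟨h1, h2, h3⟩, hc⟩⟩
      refine ⟨⟨h3, hc⟩, ?_⟩
      rw [P.part_eq_of_mem hX h1]
      exact h2
    · rintro ⟨⟨h3, hc⟩, hpart⟩
      exact ⟨P.part p.1, P.part_mem.2 (Finset.mem_univ p.1),
        ⟨⟨P.mem_part (Finset.mem_univ p.1), hpart, h3⟩, hc⟩⟩
  rw [hset, Finset.sum_filter]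

end Blocks

section Weighted

variable {α : Type*} [DecidableEq α] [Fintype α] {E : Type*} [AddCommGroup E] [Module ℂ E]

lemma weighted_sum_zero (hcard : 3 ≤ Fintype.card α)
    (c : α × α → Prop) [DecidablePred c] (KS : E) (M : α × α → E) (ε : ℂ) :
    (∑ P : Finpartition (Finset.univ : Finset α),
      (((-1 : ℂ) ^ (P.parts.card - 1)) * ((P.parts.card - 1).factorial : ℂ)) •
        (KS - ε • ∑ p ∈ (Finset.univ : Finset α).offDiag.filter c,
          (if p.2 ∈ P.part p.1 then M p else 0))) = 0 := by
  simp only [smul_sub]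
  rw [Finset.sum_sub_distrib]
  have h1 : (∑ P : Finpartition (Finset.univ : Finset α),
      (((-1 : ℂ) ^ (P.parts.card - 1)) * ((P.parts.card - 1).factorial : ℂ)) • KS) = 0 := by
    rw [← Finset.sum_smul]
    have : (∑ P : Finpartition (Finset.univ : Finset α),
        ((-1 : ℂ) ^ (P.parts.card - 1)) * ((P.parts.card - 1).factorial : ℂ))
        = asum (Finset.univ : Finset α) := rfl
    rw [this, asum_univ_zero (by omega), zero_smul]
  have h2 : (∑ P : Finpartition (Finset.univ : Finset α),
      (((-1 : ℂ) ^ (P.parts.card - 1)) * ((P.parts.card - 1).factorial : ℂ)) •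
        (ε • ∑ p ∈ (Finset.univ : Finset α).offDiag.filter c,
          (if p.2 ∈ P.part p.1 then M p else 0))) = 0 := by
    have hswap : ∀ P : Finpartition (Finset.univ : Finset α),
        (((-1 : ℂ) ^ (P.parts.card - 1)) * ((P.parts.card - 1).factorial : ℂ)) •
          (ε • ∑ p ∈ (Finset.univ : Finset α).offDiag.filter c,
            (if p.2 ∈ P.part p.1 then M p else 0))
        = ε • ∑ p ∈ (Finset.univ : Finset α).offDiag.filter c,
            (if p.2 ∈ P.part p.1 then
              (((-1 : ℂ) ^ (P.parts.card - 1)) * ((P.parts.card - 1).factorial : ℂ)) else 0)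
              • M p := by
      intro P
      rw [smul_comm, Finset.smul_sum]
      congr 1
      refine Finset.sum_congr rfl fun p _ => ?_
      split <;> simp
    rw [Finset.sum_congr rfl (fun P _ => hswap P), ← Finset.smul_sum, Finset.sum_comm]
    have hz : ∀ p ∈ (Finset.univ : Finset α).offDiag.filter c,
        (∑ P : Finpartition (Finset.univ : Finset α),
          (if p.2 ∈ P.part p.1 then
            (((-1 : ℂ) ^ (P.parts.card - 1)) * ((P.parts.card - 1).factorial : ℂ)) else 0)
            • M p) = 0 := by
      intro p hp
      rw [← Finset.sum_smul,
        sum_samePart_zero p.1 p.2 (Finset.mem_offDiag.1 (Finset.mem_filter.1 hp).1).2.2 hcard,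
        zero_smul]
    rw [Finset.sum_congr rfl hz, Finset.sum_const, smul_zero, smul_zero]
  rw [h1, h2, sub_zero]

end Weighted

end Comb

section Anal
open MeasureTheory Filter Topology

variable {E : Type*} [NormedAddCommGroup E] [NormedSpace ℂ E]

lemma real_inv_smul (t : ℝ) (v : E) : ((t : ℂ))⁻¹ • v = t⁻¹ • v := by
  rw [← Complex.ofReal_inv, Complex.coe_smul]

lemma transport (G : ℝ → E →L[ℂ] E) (h0 : G 0 = ContinuousLinearMap.id ℂ E)
    (hiso : ∀ t x, ‖G t x‖ = ‖x‖) (hcont : ∀ x, Continuous fun t => G t x)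
    {g : ℝ → E} {l : E} (hg : Tendsto g (𝓝[≠] (0:ℝ)) (𝓝 l)) :
    Tendsto (fun t => G t (g t)) (𝓝[≠] (0:ℝ)) (𝓝 l) := by
  have h1 : Tendsto (fun t => G t (g t) - G t l) (𝓝[≠] (0:ℝ)) (𝓝 0) := by
    refine squeeze_zero_norm (a := fun t => ‖g t - l‖) (fun t => le_of_eq ?_) ?_
    · rw [← map_sub, hiso]
    · simpa using (tendsto_iff_norm_sub_tendsto_zero.1 hg)
  have h2 : Tendsto (fun t => G t l) (𝓝[≠] (0:ℝ)) (𝓝 l) := by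
    have hc := ((hcont l).tendsto 0).mono_left (nhdsWithin_le_nhds (s := {(0:ℝ)}ᶜ))
    have : G 0 l = l := by rw [h0]; rfl
    rwa [this] at hc
  have := h1.add h2
  rw [zero_add] at this
  refine this.congr fun t => ?_
  abel

variable [CompleteSpace E]

lemma deriv_at_zero (G : ℝ → E →L[ℂ] E) (h0 : G 0 = ContinuousLinearMap.id ℂ E)
    {f A : E}
    (hgen : ∀ t : ℝ, G t f - f = ∫ τ in (0:ℝ)..t, G τ A)
    (hcont : Continuous fun t : ℝ => G t A) :
    Tendsto (fun t : ℝ => ((t : ℂ))⁻¹ • (G t f - f)) (𝓝[≠] (0:ℝ)) (𝓝 A) := by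
  have hF : HasDerivAt (fun u : ℝ => ∫ τ in (0:ℝ)..u, G τ A) (G 0 A) 0 :=
    intervalIntegral.integral_hasDerivAt_right (hcont.intervalIntegrable _ _)
      (hcont.stronglyMeasurableAtFilter _ _) hcont.continuousAt
  have hGA : G 0 A = A := by rw [h0]; rfl
  rw [hGA, hasDerivAt_iff_tendsto_slope] at hF
  refine hF.congr fun t => ?_
  rw [slope_def_module, intervalIntegral.integral_same, sub_zero, sub_zero, ← hgen t,
    real_inv_smul]

lemma noncommProd_deriv {ι : Type*} [DecidableEq ι]
    (G : Finset ι → ℝ → E →L[ℂ] E)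
    (h0 : ∀ X, G X 0 = ContinuousLinearMap.id ℂ E)
    (hiso : ∀ X t x, ‖G X t x‖ = ‖x‖)
    (hcont : ∀ X x, Continuous fun t => G X t x)
    (A : Finset ι → E) (f : E)
    (hder : ∀ X, Tendsto (fun t : ℝ => ((t : ℂ))⁻¹ • (G X t f - f)) (𝓝[≠] (0:ℝ)) (𝓝 (A X)))
    (PP : Finset (Finset ι))
    (hd : (↑PP : Set (Finset ι)).Pairwise fun X Y => ∀ t, Commute (G X t) (G Y t)) :
    Tendsto (fun t : ℝ => ((t : ℂ))⁻¹ •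
      (PP.noncommProd (fun X => G X t) (fun a ha b hb hab => hd ha hb hab t) f - f))
      (𝓝[≠] (0:ℝ)) (𝓝 (∑ X ∈ PP, A X)) := by
  induction PP using Finset.induction_on with
  | empty =>
    simp only [Finset.noncommProd_empty, ContinuousLinearMap.one_apply, sub_self, smul_zero,
      Finset.sum_empty]
    refine (tendsto_const_nhds (x := (0 : E))).congr fun t => ?_
    erw [Finset.noncommProd_empty]
    simp
  | @insert X Q hX ih =>
    have hd' : (↑Q : Set (Finset ι)).Pairwise fun X Y => ∀ t, Commute (G X t) (G Y t) :=
      hd.mono (by exact_mod_cast Finset.subset_insert X Q)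
    set Qf : ℝ → E := fun t =>
      Q.noncommProd (fun Y => G Y t) (fun a ha b hb hab => hd' ha hb hab t) f with hQf
    have hpoint : ∀ t : ℝ,
        ((t : ℂ))⁻¹ • ((insert X Q).noncommProd (fun Y => G Y t)
          (fun a ha b hb hab => hd ha hb hab t) f - f)
        = G X t (((t : ℂ))⁻¹ • (Qf t - f)) + ((t : ℂ))⁻¹ • (G X t f - f) := by
      intro t
      erw [Finset.noncommProd_insert_of_notMem _ _ _ _ hX]
      rw [ContinuousLinearMap.mul_apply,
        _root_.map_smul, map_sub]
      rw [smul_sub, smul_sub, smul_sub]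
      abel
    have hlim1 : Tendsto (fun t => G X t (((t : ℂ))⁻¹ • (Qf t - f))) (𝓝[≠] (0:ℝ))
        (𝓝 (∑ Y ∈ Q, A Y)) :=
      transport (G X) (h0 X) (hiso X) (hcont X) (ih hd')
    have htot := hlim1.add (hder X)
    rw [Finset.sum_insert hX, add_comm (A X)]
    exact (htot.congr fun t => (hpoint t).symm)

end Anal

end CumAux

theorem generator_of_second_and_higher_order_cumulants
    (s : ℕ)
    (L : ℕ → Type*) [∀ m, NormedAddCommGroup (L m)] [∀ m, NormedSpace ℂ (L m)]
    [∀ m, CompleteSpace (L m)]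
    (ε : ℝ) (hε : 0 < ε)
    -- dense subspaces `𝔏¹₀(ℋ_m) ⊆ 𝔏¹(ℋ_m)`
    (D : ∀ m, Submodule ℂ (L m)) (hD : ∀ m, Dense ((D m : Set (L m))))
    -- the groups `𝒢_{|θ(X)|}(-t, θ(X))` on `𝔏¹(ℋ_{s+n})`
    (Gc : (n : ℕ) → Finset (Fin (n + 1)) → ℝ → L (s + n) →L[ℂ] L (s + n))
    -- `𝒩_int(i,j)` and the multiplications by the bounded potential `Φ(i,j)`
    (Nint Phil Phir : (m : ℕ) → ℕ → ℕ → L m →L[ℂ] L m)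
    (hNint : ∀ m i j f, (Nint m i j) f = Complex.I • ((Phil m i j) f - (Phir m i j) f))
    -- generators of the one-item groups
    (K : (n : ℕ) → Fin (n + 1) → L (s + n) →ₗ[ℂ] L (s + n))
    -- groups of operators: isometric, strongly continuous, commuting on disjoint sets
    (hG0 : ∀ n X, Gc n X 0 = ContinuousLinearMap.id ℂ (L (s + n)))
    (hGgrp : ∀ n X t u, Gc n X (t + u) = (Gc n X t).comp (Gc n X u))
    (hGiso : ∀ n X t f, ‖Gc n X t f‖ = ‖f‖)
    (hGcont : ∀ n X f, Continuous fun t : ℝ => Gc n X t f)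
    (hcomm : ∀ n (X Y : Finset (Fin (n + 1))) (t : ℝ),
      Disjoint X Y → Commute (Gc n X t) (Gc n Y t))
    -- `𝒢_{θ(X)}` is generated by the one-item generators plus the `ε`-scaled two-body
    -- cross interactions between the items of `X` (integral form on the dense domain)
    (hgen : ∀ n (X : Finset (Fin (n + 1))), ∀ f ∈ D (s + n), ∀ t : ℝ,
      Gc n X t f - f
        = ∫ τ in (0:ℝ)..t, Gc n X τ
            ((∑ i ∈ X, K n i f)
              - (ε : ℂ) • ∑ p ∈ X.offDiag.filter (fun p => p.1 < p.2),
                  ∑ a ∈ itemParticles s p.1, ∑ b ∈ itemParticles s p.2,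
                    (Nint (s + n) a b) f)) :
    -- (i) for `n = 1`, in the sense of the norm convergence on `𝔏¹(ℋ_{s+1})`:
    -- `lim_{t→0} (1/t) 𝔄₂(t,{Y},s+1) f = -ε Σ_{i=1}^s 𝒩_int(i,s+1) f`, where
    -- `𝔄₂(t,{Y},s+1) = 𝒢_{s+1}(-t,Y,s+1) - 𝒢_s(-t,Y) 𝒢₁(-t,s+1)`
    (∀ f ∈ D (s + 1),
      Filter.Tendsto
        (fun t : ℝ => ((t : ℂ))⁻¹ •
          ((Gc 1 Finset.univ t) f - (Gc 1 {(0 : Fin 2)} t) ((Gc 1 {(1 : Fin 2)} t) f)))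
        (nhdsWithin 0 {(0:ℝ)}ᶜ)
        (nhds (-((ε : ℂ) • (∑ i ∈ Finset.range s, Nint (s + 1) i s) f))))
    -- (ii) for `n > 1`: `lim_{t→0} (1/t) 𝔄_{1+n}(t) f = 0` in trace norm on `𝔏¹(ℋ_{s+n})`
    ∧ (∀ n : ℕ, 1 < n → ∀ f ∈ D (s + n),
        Filter.Tendsto
          (fun t : ℝ => ((t : ℂ))⁻¹ •
            (cumulant (fun X => Gc n X t) (fun X Y h => hcomm n X Y t h) f))
          (nhdsWithin 0 {(0:ℝ)}ᶜ) (nhds 0)) := by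
  classical
  -- the generator of the group `Gc n X` evaluated on `f`
  have hder : ∀ (n : ℕ) (X : Finset (Fin (n + 1))) (f : L (s + n)), f ∈ D (s + n) →
      Filter.Tendsto (fun t : ℝ => ((t : ℂ))⁻¹ • (Gc n X t f - f))
        (nhdsWithin 0 {(0:ℝ)}ᶜ)
        (nhds ((∑ i ∈ X, K n i f)
          - (ε : ℂ) • ∑ p ∈ X.offDiag.filter (fun p => p.1 < p.2),
              ∑ a ∈ itemParticles s p.1, ∑ b ∈ itemParticles s p.2,
                (Nint (s + n) a b) f)) := by
    intro n X f hf
    exact CumAux.deriv_at_zero (fun t => Gc n X t) (hG0 n X) (fun t => hgen n X f hf t)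
      (hGcont n X _)
  constructor
  · -- Part (i) : n = 1
    intro f hf
    have e0 : itemParticles s (0 : Fin 2) = Finset.range s := by
      simp [itemParticles]
    have e1 : itemParticles s (1 : Fin 2) = {s} := by
      simp [itemParticles]
    have epair : (Finset.univ : Finset (Fin 2)).offDiag.filter (fun p => p.1 < p.2)
        = {((0 : Fin 2), (1 : Fin 2))} := by decide
    have epair0 : (({(0 : Fin 2)} : Finset (Fin 2)).offDiag.filter (fun p => p.1 < p.2)) = ∅ := by
      decide
    have epair1 : (({(1 : Fin 2)} : Finset (Fin 2)).offDiag.filter (fun p => p.1 < p.2)) = ∅ := by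
      decide
    have h1 := hder 1 Finset.univ f hf
    have h3 := hder 1 {(0 : Fin 2)} f hf
    have h2 := CumAux.transport (fun t => Gc 1 {(0 : Fin 2)} t) (hG0 1 _)
      (fun t x => hGiso 1 _ t x) (fun x => hGcont 1 _ x) (hder 1 {(1 : Fin 2)} f hf)
    have hcomb := h1.sub (h2.add h3)
    have hpt : ∀ t : ℝ,
        (((t : ℂ))⁻¹ • (Gc 1 Finset.univ t f - f))
          - ((Gc 1 {(0 : Fin 2)} t) (((t : ℂ))⁻¹ • (Gc 1 {(1 : Fin 2)} t f - f))
            + ((t : ℂ))⁻¹ • (Gc 1 {(0 : Fin 2)} t f - f))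
        = ((t : ℂ))⁻¹ •
            ((Gc 1 Finset.univ t) f - (Gc 1 {(0 : Fin 2)} t) ((Gc 1 {(1 : Fin 2)} t) f)) := by
      intro t
      rw [_root_.map_smul, map_sub]
      simp only [smul_sub]
      abel
    have hval :
        ((∑ i ∈ Finset.univ, K 1 i f)
          - (ε : ℂ) • ∑ p ∈ (Finset.univ : Finset (Fin 2)).offDiag.filter (fun p => p.1 < p.2),
              ∑ a ∈ itemParticles s p.1, ∑ b ∈ itemParticles s p.2, (Nint (s + 1) a b) f)
        - (((∑ i ∈ ({(1 : Fin 2)} : Finset (Fin 2)), K 1 i f)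
          - (ε : ℂ) • ∑ p ∈ (({(1 : Fin 2)} : Finset (Fin 2)).offDiag.filter (fun p => p.1 < p.2)),
              ∑ a ∈ itemParticles s p.1, ∑ b ∈ itemParticles s p.2, (Nint (s + 1) a b) f)
          + ((∑ i ∈ ({(0 : Fin 2)} : Finset (Fin 2)), K 1 i f)
          - (ε : ℂ) • ∑ p ∈ (({(0 : Fin 2)} : Finset (Fin 2)).offDiag.filter (fun p => p.1 < p.2)),
              ∑ a ∈ itemParticles s p.1, ∑ b ∈ itemParticles s p.2, (Nint (s + 1) a b) f))
        = -((ε : ℂ) • (∑ i ∈ Finset.range s, Nint (s + 1) i s) f) := by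
      rw [epair, epair0, epair1, Finset.sum_singleton, Finset.sum_singleton,
        Finset.sum_singleton, Fin.sum_univ_two]
      simp only [e0, e1, Finset.sum_singleton, Finset.sum_empty, smul_zero,
        ContinuousLinearMap.coe_sum', Finset.sum_apply]
      abel
    rw [hval] at hcomb
    exact hcomb.congr hpt
  · -- Part (ii) : n > 1
    intro n hn f hf
    set c : Fin (n + 1) × Fin (n + 1) → Prop := fun p => p.1 < p.2 with hc
    set M : Fin (n + 1) × Fin (n + 1) → L (s + n) := fun p =>
      ∑ a ∈ itemParticles s p.1, ∑ b ∈ itemParticles s p.2, (Nint (s + n) a b) f with hM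
    set w : Finpartition (Finset.univ : Finset (Fin (n + 1))) → ℂ := fun P =>
      ((-1 : ℂ) ^ (P.parts.card - 1)) * (Nat.factorial (P.parts.card - 1) : ℂ) with hw
    have hcard3 : 3 ≤ Fintype.card (Fin (n + 1)) := by
      rw [Fintype.card_fin]; omega
    have hzero : (∑ P : Finpartition (Finset.univ : Finset (Fin (n + 1))), w P) = 0 :=
      CumAux.asum_univ_zero (by rw [Fintype.card_fin]; omega)
    -- the pointwise value of the scaled cumulant
    have hcum : ∀ t : ℝ,
        cumulant (fun X => Gc n X t) (fun X Y h => hcomm n X Y t h) f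
          = ∑ P : Finpartition (Finset.univ : Finset (Fin (n + 1))),
              w P • ((P.parts.noncommProd (fun X => Gc n X t)
                (fun a ha b hb hab => hcomm n a b t (P.disjoint ha hb hab))) f) := by
      intro t
      rw [cumulant]
      rw [ContinuousLinearMap.sum_apply]
      refine Finset.sum_congr rfl fun P _ => ?_
      rw [ContinuousLinearMap.smul_apply]
    have hpt : ∀ t : ℝ,
        (∑ P : Finpartition (Finset.univ : Finset (Fin (n + 1))),
          w P • (((t : ℂ))⁻¹ • ((P.parts.noncommProd (fun X => Gc n X t)
            (fun a ha b hb hab => hcomm n a b t (P.disjoint ha hb hab))) f - f)))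
        = ((t : ℂ))⁻¹ • (cumulant (fun X => Gc n X t) (fun X Y h => hcomm n X Y t h) f) := by
      intro t
      rw [hcum t, Finset.smul_sum]
      calc (∑ P : Finpartition (Finset.univ : Finset (Fin (n + 1))),
            w P • (((t : ℂ))⁻¹ • ((P.parts.noncommProd (fun X => Gc n X t)
              (fun a ha b hb hab => hcomm n a b t (P.disjoint ha hb hab))) f - f)))
          = (∑ P : Finpartition (Finset.univ : Finset (Fin (n + 1))),
              (w P • (((t : ℂ))⁻¹ • ((P.parts.noncommProd (fun X => Gc n X t)
                (fun a ha b hb hab => hcomm n a b t (P.disjoint ha hb hab))) f))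
                - w P • (((t : ℂ))⁻¹ • f))) := by
            refine Finset.sum_congr rfl fun P _ => ?_
            rw [smul_sub, smul_sub]
        _ = (∑ P : Finpartition (Finset.univ : Finset (Fin (n + 1))),
              w P • (((t : ℂ))⁻¹ • ((P.parts.noncommProd (fun X => Gc n X t)
                (fun a ha b hb hab => hcomm n a b t (P.disjoint ha hb hab))) f)))
              - (∑ P : Finpartition (Finset.univ : Finset (Fin (n + 1))), w P)
                  • (((t : ℂ))⁻¹ • f) := by
            rw [Finset.sum_sub_distrib, Finset.sum_smul]
        _ = ∑ P : Finpartition (Finset.univ : Finset (Fin (n + 1))),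
              w P • (((t : ℂ))⁻¹ • ((P.parts.noncommProd (fun X => Gc n X t)
                (fun a ha b hb hab => hcomm n a b t (P.disjoint ha hb hab))) f)) := by
            rw [hzero, zero_smul, sub_zero]
        _ = _ := by
            refine Finset.sum_congr rfl fun P _ => ?_
            rw [smul_comm]
    -- limit of each summand
    have hlim : Filter.Tendsto
        (fun t : ℝ => ∑ P : Finpartition (Finset.univ : Finset (Fin (n + 1))),
          w P • (((t : ℂ))⁻¹ • ((P.parts.noncommProd (fun X => Gc n X t)
            (fun a ha b hb hab => hcomm n a b t (P.disjoint ha hb hab))) f - f)))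
        (nhdsWithin 0 {(0:ℝ)}ᶜ)
        (nhds (∑ P : Finpartition (Finset.univ : Finset (Fin (n + 1))),
          w P • (∑ X ∈ P.parts, ((∑ i ∈ X, K n i f)
            - (ε : ℂ) • ∑ p ∈ X.offDiag.filter c, M p)))) := by
      refine tendsto_finset_sum _ fun P _ => ?_
      refine Filter.Tendsto.const_smul ?_ (w P)
      exact CumAux.noncommProd_deriv (fun X t => Gc n X t) (fun X => hG0 n X)
        (fun X t x => hGiso n X t x) (fun X x => hGcont n X x)
        (fun X => (∑ i ∈ X, K n i f) - (ε : ℂ) • ∑ p ∈ X.offDiag.filter c, M p) f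
        (fun X => hder n X f hf) P.parts
        (fun a ha b hb hab t => hcomm n a b t (P.disjoint ha hb hab))
    -- the limit vanishes
    have hfinal : (∑ P : Finpartition (Finset.univ : Finset (Fin (n + 1))),
        w P • (∑ X ∈ P.parts, ((∑ i ∈ X, K n i f)
          - (ε : ℂ) • ∑ p ∈ X.offDiag.filter c, M p))) = 0 := by
      have hper : ∀ P : Finpartition (Finset.univ : Finset (Fin (n + 1))),
          (∑ X ∈ P.parts, ((∑ i ∈ X, K n i f)
            - (ε : ℂ) • ∑ p ∈ X.offDiag.filter c, M p))
          = (∑ i ∈ (Finset.univ : Finset (Fin (n + 1))), K n i f)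
            - (ε : ℂ) • ∑ p ∈ (Finset.univ : Finset (Fin (n + 1))).offDiag.filter c,
                (if p.2 ∈ P.part p.1 then M p else 0) := by
        intro P
        rw [Finset.sum_sub_distrib, CumAux.blocks_item_sum P (fun i => K n i f),
          ← Finset.smul_sum, CumAux.blocks_pair_sum P c M]
      have hper2 : (∑ P : Finpartition (Finset.univ : Finset (Fin (n + 1))),
          w P • (∑ X ∈ P.parts, ((∑ i ∈ X, K n i f)
            - (ε : ℂ) • ∑ p ∈ X.offDiag.filter c, M p)))
          = ∑ P : Finpartition (Finset.univ : Finset (Fin (n + 1))),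
              w P • ((∑ i ∈ (Finset.univ : Finset (Fin (n + 1))), K n i f)
                - (ε : ℂ) • ∑ p ∈ (Finset.univ : Finset (Fin (n + 1))).offDiag.filter c,
                    (if p.2 ∈ P.part p.1 then M p else 0)) :=
        Finset.sum_congr rfl fun P _ => by rw [hper P]
      rw [hper2]
      exact CumAux.weighted_sum_zero hcard3 c
        (∑ i ∈ (Finset.univ : Finset (Fin (n + 1))), K n i f) M (ε : ℂ)
    rw [hfinal] at hlim
    exact hlim.congr hpt
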